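/- The pressure function has the asymptote lim_{t→∞} (p(t) − t log(3/2)) = 0; in particular p(t) ≥ t log(3/2) for all t ≥ 0. -/

import Mathlib

noncomputable def psi (x : ℝ) : ℝ := Real.log (1 - Real.cos (2 * Real.pi * x))

noncomputable def psiSum (n : ℕ) (x : ℝ) : ℝ :=
  ∑ ℓ ∈ Finset.range n, psi (Int.fract ((2:ℝ) ^ ℓ * x))

/-- `A t n = ∑_{ω ∈ Σ^n} sup_{x ∈ ⟨ω⟩} exp(t ψ_n(x))`. -/
noncomputable def A (t : ℝ) (n : ℕ) : ENNReal :=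
  ∑ k ∈ Finset.range (2^n),
    ⨆ y ∈ Set.Icc ((k:ℝ) / 2^n) ((k+1 : ℝ) / 2^n), ENNReal.ofReal (Real.exp (t * psiSum n y))

open Real Filter Finset

/-! ### Auxiliary definitions -/

noncomputable def cc (x : ℝ) (ℓ : ℕ) : ℝ := Real.cos (2 * Real.pi * (2 ^ ℓ * x))
noncomputable def uu (x : ℝ) (ℓ : ℕ) : ℝ := 1 - cc x ℓ

noncomputable def Rcnt (x : ℝ) (n : ℕ) : ℕ :=
  ((Finset.range (n-1)).filter (fun ℓ => 0 ≤ cc x ℓ)).card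

def rho (n k : ℕ) : ℕ :=
  ((Finset.range (n-1)).filter (fun i => k.testBit i = k.testBit (i+1))).card

/-! ### Elementary facts -/

lemma cos_two_pi_fract (z : ℝ) :
    Real.cos (2 * Real.pi * Int.fract z) = Real.cos (2 * Real.pi * z) := by
  rw [Int.fract]
  have : 2 * Real.pi * (z - ⌊z⌋) = 2 * Real.pi * z - ⌊z⌋ * (2 * Real.pi) := by ring
  rw [this, Real.cos_sub_int_mul_two_pi]

lemma psiSum_eq (n : ℕ) (x : ℝ) :
    psiSum n x = ∑ ℓ ∈ Finset.range n, Real.log (uu x ℓ) := by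
  unfold psiSum psi uu cc
  refine Finset.sum_congr rfl fun ℓ _ => ?_
  rw [cos_two_pi_fract]

lemma uu_nonneg (x : ℝ) (ℓ : ℕ) : 0 ≤ uu x ℓ := by
  have := Real.cos_le_one (2 * Real.pi * (2 ^ ℓ * x)); simp [uu, cc]; linarith

lemma uu_le_two (x : ℝ) (ℓ : ℕ) : uu x ℓ ≤ 2 := by
  have := Real.neg_one_le_cos (2 * Real.pi * (2 ^ ℓ * x)); simp [uu, cc]; linarith

lemma uu_succ (x : ℝ) (ℓ : ℕ) : uu x (ℓ+1) = 2 * (1 - cc x ℓ) * (1 + cc x ℓ) := by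
  have h : 2 * Real.pi * (2 ^ (ℓ+1) * x) = 2 * (2 * Real.pi * (2 ^ ℓ * x)) := by ring
  rw [uu, cc, h, Real.cos_two_mul]; unfold cc; ring

lemma pair_bound (c : ℝ) : 2 * (1 - c)^3 * (1 + c) ≤ 27/8 := by
  nlinarith [sq_nonneg (2*c+1), sq_nonneg (2*c-3), sq_nonneg ((2*c+1)*(2*c-3))]

lemma pair_bound_good (c : ℝ) (h0 : 0 ≤ c) (h1 : c ≤ 1) : 2 * (1 - c)^3 * (1 + c) ≤ 2 := by
  nlinarith [sq_nonneg c, sq_nonneg (1-c)]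

lemma uu_pair (x : ℝ) (ℓ : ℕ) :
    (uu x ℓ)^2 * uu x (ℓ+1) ≤ if 0 ≤ cc x ℓ then 2 else 27/8 := by
  have h : (uu x ℓ)^2 * uu x (ℓ+1) = 2 * (1 - cc x ℓ)^3 * (1 + cc x ℓ) := by
    rw [uu_succ]; unfold uu cc; ring
  rw [h]
  split_ifs with hc
  · exact pair_bound_good _ hc (Real.cos_le_one _)
  · exact pair_bound _

/-! ### The product bound (no zero factors) -/

lemma pow_conv (m R : ℕ) (hR : R ≤ m) :
    (2:ℝ)^R * (27/8)^(m-R) = (27/8)^m * (16/27)^R := by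
  have h2 : ((16:ℝ)/27)^R * ((27:ℝ)/8)^R = 2^R := by rw [← mul_pow]; norm_num
  rw [pow_sub₀ (27/8:ℝ) (by norm_num) hR]
  field_simp
  rw [← h2]; ring

lemma case1_bound (x : ℝ) (m : ℕ) :
    (∏ ℓ ∈ Finset.range (m+1), uu x ℓ)^3 ≤ 8 * (27/8)^m * (16/27)^(Rcnt x (m+1)) := by
  have hid : (∏ ℓ ∈ Finset.range (m+1), uu x ℓ)^3
      = uu x 0 * (uu x m)^2 * ∏ ℓ ∈ Finset.range m, ((uu x ℓ)^2 * uu x (ℓ+1)) := by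
    rw [Finset.prod_mul_distrib, Finset.prod_pow]
    calc (∏ ℓ ∈ Finset.range (m+1), uu x ℓ)^3
        = ((∏ ℓ ∈ Finset.range m, uu x ℓ) * uu x m)^2
          * ((∏ ℓ ∈ Finset.range m, uu x (ℓ+1)) * uu x 0) := by
          rw [← Finset.prod_range_succ, ← Finset.prod_range_succ']; ring
      _ = _ := by ring
  rw [hid]
  have hprodle : ∏ ℓ ∈ Finset.range m, ((uu x ℓ)^2 * uu x (ℓ+1)) ≤
      ∏ ℓ ∈ Finset.range m, (if 0 ≤ cc x ℓ then (2:ℝ) else 27/8) := by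
    apply Finset.prod_le_prod
    · intro i _; exact mul_nonneg (sq_nonneg _) (uu_nonneg _ _)
    · intro i _; exact uu_pair x i
  have hR : Rcnt x (m+1) ≤ m := by
    unfold Rcnt
    exact (Finset.card_filter_le _ _).trans (by simp)
  have hprodeq : ∏ ℓ ∈ Finset.range m, (if 0 ≤ cc x ℓ then (2:ℝ) else 27/8)
      = (27/8)^m * (16/27)^(Rcnt x (m+1)) := by
    rw [Finset.prod_ite, Finset.prod_const, Finset.prod_const]
    have hcard : ((Finset.range m).filter (fun ℓ => ¬ 0 ≤ cc x ℓ)).card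
        = m - Rcnt x (m+1) := by
      have h := Finset.card_filter_add_card_filter_not (s := Finset.range m)
        (p := fun ℓ => 0 ≤ cc x ℓ)
      simp only [Finset.card_range] at h
      unfold Rcnt
      simp only [Nat.add_sub_cancel]
      omega
    rw [hcard]
    show (2:ℝ)^(Rcnt x (m+1)) * (27/8)^(m - Rcnt x (m+1)) = _
    exact pow_conv m _ hR
  have hbase : uu x 0 * (uu x m)^2 ≤ 8 := by
    have := uu_le_two x 0; have := uu_le_two x m
    have := uu_nonneg x 0; have := uu_nonneg x m
    nlinarith
  calc uu x 0 * (uu x m)^2 * ∏ ℓ ∈ Finset.range m, ((uu x ℓ)^2 * uu x (ℓ+1))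
      ≤ 8 * ((27/8)^m * (16/27)^(Rcnt x (m+1))) := by
        apply mul_le_mul hbase (hprodle.trans (le_of_eq hprodeq)) ?_ (by norm_num)
        · exact Finset.prod_nonneg fun i _ => mul_nonneg (sq_nonneg _) (uu_nonneg _ _)
    _ = _ := by ring

/-! ### The master cube bound, handling zero factors -/

lemma Rcnt_le (x : ℝ) (n : ℕ) : Rcnt x n ≤ n - 1 := by
  unfold Rcnt; exact (Finset.card_filter_le _ _).trans (by simp)

lemma Rcnt_mono_bound (x : ℝ) {m n : ℕ} (h1 : 1 ≤ m) (hmn : m ≤ n) :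
    Rcnt x n ≤ Rcnt x m + (n - m) := by
  unfold Rcnt
  have hsub : (Finset.range (n-1)).filter (fun ℓ => 0 ≤ cc x ℓ) ⊆
      ((Finset.range (m-1)).filter (fun ℓ => 0 ≤ cc x ℓ)) ∪ Finset.Ico (m-1) (n-1) := by
    intro ℓ hℓ
    simp only [Finset.mem_filter, Finset.mem_range] at hℓ
    simp only [Finset.mem_union, Finset.mem_filter, Finset.mem_range, Finset.mem_Ico]
    rcases Nat.lt_or_ge ℓ (m-1) with h | h
    · exact Or.inl ⟨h, hℓ.2⟩
    · exact Or.inr ⟨h, hℓ.1⟩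
  calc _ ≤ _ := Finset.card_le_card hsub
    _ ≤ _ + _ := Finset.card_union_le _ _
    _ ≤ _ := by rw [Nat.card_Ico]; omega

lemma bound_mono (x : ℝ) {m n : ℕ} (h1 : 1 ≤ m) (hmn : m ≤ n) :
    8*((27:ℝ)/8)^(m-1)*(16/27)^(Rcnt x m) ≤ 8*(27/8)^(n-1)*(16/27)^(Rcnt x n) := by
  have hR := Rcnt_mono_bound x h1 hmn
  have hmono : ((16:ℝ)/27)^(Rcnt x m + (n-m)) ≤ (16/27)^(Rcnt x n) :=
    pow_le_pow_of_le_one (by norm_num) (by norm_num) hR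
  have hsplit : ((27:ℝ)/8)^(n-1) = (27/8)^(m-1) * (27/8)^(n-m) := by
    rw [← pow_add]; congr 1; omega
  have h2 : ((27:ℝ)/8)^(n-m) * (16/27)^(n-m) = 2^(n-m) := by rw [← mul_pow]; norm_num
  have hone : (1:ℝ) ≤ 2^(n-m) := one_le_pow₀ (by norm_num)
  calc 8*((27:ℝ)/8)^(m-1)*(16/27)^(Rcnt x m)
      ≤ 8*(27/8)^(m-1)*(16/27)^(Rcnt x m) * 2^(n-m) := by
        nth_rewrite 1 [← mul_one (8*((27:ℝ)/8)^(m-1)*(16/27)^(Rcnt x m))]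
        exact mul_le_mul_of_nonneg_left hone (by positivity)
    _ = 8*(27/8)^(n-1) * (16/27)^(Rcnt x m + (n-m)) := by
        rw [hsplit, pow_add]; rw [← h2]; ring
    _ ≤ _ := by
        apply mul_le_mul_of_nonneg_left hmono (by positivity)

lemma exp_cube_bound (x : ℝ) (n : ℕ) (hn : 1 ≤ n) :
    (Real.exp (psiSum n x))^3 ≤ 8 * (27/8)^(n-1) * (16/27)^(Rcnt x n) := by
  classical
  by_cases hz : ∃ ℓ, ℓ < n ∧ uu x ℓ = 0
  · set m := Nat.find hz with hm
    obtain ⟨hmn, hum⟩ := Nat.find_spec hz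
    have hmin : ∀ ℓ < m, uu x ℓ ≠ 0 := by
      intro ℓ hℓ h0
      exact Nat.find_min hz hℓ ⟨hℓ.trans hmn, h0⟩
    have hzero : ∀ ℓ, m ≤ ℓ → uu x ℓ = 0 := by
      intro ℓ hℓ
      induction ℓ with
      | zero => exact Nat.le_zero.mp hℓ ▸ hum
      | succ k ih =>
        rcases Nat.lt_or_ge k m with h | h
        · have : m = k + 1 := by omega
          exact this ▸ hum
        · have e : (1:ℝ) - cc x k = 0 := ih h
          rw [uu_succ, e]; ring
    have hpsi : psiSum n x = psiSum m x := by
      rw [psiSum_eq, psiSum_eq]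
      refine (Finset.sum_subset (Finset.range_subset_range.2 hmn.le) fun ℓ hℓ hℓm => ?_).symm
      rw [hzero ℓ (Nat.le_of_not_lt fun h => hℓm (Finset.mem_range.2 h)), Real.log_zero]
    rcases Nat.eq_zero_or_pos m with hm0 | hmpos
    · have hps0 : psiSum n x = 0 := by
        rw [hpsi, hm0]; simp [psiSum]
      rw [hps0, Real.exp_zero, one_pow]
      have hRle := Rcnt_le x n
      have hmono : ((16:ℝ)/27)^(n-1) ≤ (16/27)^(Rcnt x n) :=
        pow_le_pow_of_le_one (by norm_num) (by norm_num) hRle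
      have h2 : ((27:ℝ)/8)^(n-1)*(16/27)^(n-1) = 2^(n-1) := by rw [← mul_pow]; norm_num
      have hone : (1:ℝ) ≤ 2^(n-1) := one_le_pow₀ (by norm_num)
      calc (1:ℝ) ≤ 8 * 2^(n-1) := by nlinarith
        _ = 8 * (27/8)^(n-1)*(16/27)^(n-1) := by rw [mul_assoc, h2]
        _ ≤ _ := by
            rw [mul_assoc, mul_assoc]
            exact mul_le_mul_of_nonneg_left
              (mul_le_mul_of_nonneg_left hmono (by positivity)) (by norm_num)
    · obtain ⟨m', hm'⟩ := Nat.exists_eq_succ_of_ne_zero (Nat.pos_iff_ne_zero.mp hmpos)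
      have hexp : Real.exp (psiSum m x) = ∏ ℓ ∈ Finset.range m, uu x ℓ := by
        rw [psiSum_eq, Real.exp_sum]
        exact Finset.prod_congr rfl fun ℓ hℓ => Real.exp_log
          (lt_of_le_of_ne (uu_nonneg x ℓ) (Ne.symm (hmin ℓ (Finset.mem_range.1 hℓ))))
      have hc1 : (Real.exp (psiSum m x))^3 ≤ 8 * (27/8)^(m-1) * (16/27)^(Rcnt x m) := by
        rw [hexp, hm']
        simpa using case1_bound x m'
      calc (Real.exp (psiSum n x))^3 = (Real.exp (psiSum m x))^3 := by rw [hpsi]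
        _ ≤ 8 * (27/8)^(m-1) * (16/27)^(Rcnt x m) := hc1
        _ ≤ _ := bound_mono x hmpos hmn.le
  · push_neg at hz
    have hpos : ∀ ℓ ∈ Finset.range n, 0 < uu x ℓ :=
      fun ℓ hℓ => lt_of_le_of_ne (uu_nonneg x ℓ) (Ne.symm (hz ℓ (Finset.mem_range.1 hℓ)))
    have hexp : Real.exp (psiSum n x) = ∏ ℓ ∈ Finset.range n, uu x ℓ := by
      rw [psiSum_eq, Real.exp_sum]
      exact Finset.prod_congr rfl fun ℓ hℓ => Real.exp_log (hpos ℓ hℓ)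
    rw [hexp]
    obtain ⟨m, hm⟩ := Nat.exists_eq_succ_of_ne_zero (by omega : n ≠ 0)
    rw [hm]
    simpa using case1_bound x m

/-! ### Bits force nonnegative cosine -/

lemma bits_mod (k i : ℕ) (hbit : k.testBit i = k.testBit (i+1)) :
    k % 2^(i+2) < 2^i ∨ 3 * 2^i ≤ k % 2^(i+2) := by
  have hD : k.testBit i = decide (k / 2^i % 2 = 1) := Nat.testBit_eq_decide_div_mod_eq
  have hD1 : k.testBit (i+1) = decide ((k / 2^i) / 2 % 2 = 1) := by
    rw [Nat.testBit_eq_decide_div_mod_eq, Nat.div_div_eq_div_mul, pow_succ]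
  rw [hD, hD1] at hbit
  have hiff := decide_eq_decide.mp hbit
  set D := k / 2^i with hDdef
  have hd03 : D % 4 = 0 ∨ D % 4 = 3 := by omega
  have hm : k % (2^i * 4) = k % 2^i + 2^i * (D % 4) := Nat.mod_mul
  have hpow : 2^(i+2) = 2^i * 4 := by ring
  have hlt : k % 2^i < 2^i := Nat.mod_lt _ (by positivity)
  rw [hpow, hm]
  rcases hd03 with h | h <;> rw [h] <;> omega

lemma cos_two_pi_nonneg_of_mem {w : ℝ} (h : w ∈ Set.Icc (0:ℝ) (1/4) ∪ Set.Icc (3/4) 1) :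
    0 ≤ Real.cos (2 * Real.pi * w) := by
  have hpi := Real.pi_pos
  rcases h with h | h
  · apply Real.cos_nonneg_of_mem_Icc
    constructor
    · nlinarith [h.1]
    · nlinarith [h.2]
  · rw [show 2 * Real.pi * w = (2*Real.pi*w - 1 * (2*Real.pi)) + 1*(2*Real.pi) by ring]
    rw [show ((1:ℝ)*(2*Real.pi)) = ((1:ℤ)) * (2*Real.pi) by norm_num]
    rw [Real.cos_add_int_mul_two_pi]
    apply Real.cos_nonneg_of_mem_Icc
    constructor
    · nlinarith [h.1]
    · nlinarith [h.2]

lemma cos_nonneg_of_bits (n i k : ℕ) (hi : i + 2 ≤ n)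
    (hbit : k.testBit i = k.testBit (i+1)) (x : ℝ)
    (hx : x ∈ Set.Icc ((k:ℝ)/2^n) ((k+1:ℝ)/2^n)) :
    0 ≤ cc x (n - 2 - i) := by
  set ℓ := n - 2 - i with hℓ
  have hln : ℓ + (i+2) = n := by omega
  set q := k / 2^(i+2) with hq
  set r := k % 2^(i+2) with hr
  have hkr : (2:ℕ)^(i+2) * q + r = k := Nat.div_add_mod k _
  have hrlt : r < 2^(i+2) := Nat.mod_lt _ (by positivity)
  have h2n : ((2:ℝ))^n = 2^ℓ * 2^(i+2) := by rw [← pow_add, hln]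
  have hpos : (0:ℝ) < 2^(i+2) := by positivity
  have hlpos : (0:ℝ) < 2^ℓ := by positivity
  obtain ⟨hx1, hx2⟩ := hx
  set z : ℝ := 2^ℓ * x with hz
  have hz1 : (k:ℝ)/2^(i+2) ≤ z := by
    rw [div_le_iff₀ hpos]
    calc (k:ℝ) = 2^n * ((k:ℝ)/2^n) := by field_simp
      _ ≤ 2^n * x := by apply mul_le_mul_of_nonneg_left hx1 (by positivity)
      _ = z * 2^(i+2) := by rw [h2n, hz]; ring
  have hz2 : z ≤ ((k:ℝ)+1)/2^(i+2) := by
    rw [le_div_iff₀ hpos]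
    calc z * 2^(i+2) = 2^n * x := by rw [h2n, hz]; ring
      _ ≤ 2^n * (((k:ℝ)+1)/2^n) := mul_le_mul_of_nonneg_left hx2 (by positivity)
      _ = (k:ℝ)+1 := by field_simp
  set w : ℝ := z - q with hw
  have hkR : (k:ℝ) = 2^(i+2) * q + r := by exact_mod_cast congrArg (Nat.cast : ℕ → ℝ) hkr |>.symm
  have hw1 : (r:ℝ)/2^(i+2) ≤ w := by
    rw [div_le_iff₀ hpos, hw]
    rw [hkR] at hz1
    rw [div_le_iff₀ hpos] at hz1
    linarith
  have hw2 : w ≤ ((r:ℝ)+1)/2^(i+2) := by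
    rw [le_div_iff₀ hpos, hw]
    rw [hkR] at hz2
    rw [le_div_iff₀ hpos] at hz2
    linarith
  have hcc : cc x ℓ = Real.cos (2*Real.pi*w) := by
    unfold cc
    rw [hw, hz]
    rw [show 2*Real.pi*(2^ℓ*x - (q:ℝ)) = 2*Real.pi*(2^ℓ*x) - (q:ℤ)*(2*Real.pi) by push_cast; ring]
    rw [Real.cos_sub_int_mul_two_pi]
  rw [← hℓ] at *
  rw [hcc]
  apply cos_two_pi_nonneg_of_mem
  have hq14 : ((2:ℝ)^i)/2^(i+2) = 1/4 := by
    rw [pow_add]; field_simp; ring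
  rcases bits_mod k i hbit with hcase | hcase
  · left
    constructor
    · have h0 : (0:ℝ) ≤ (r:ℝ)/2^(i+2) := by positivity
      linarith
    · have hrle : (r:ℝ) + 1 ≤ 2^i := by exact_mod_cast hcase
      have hd : ((r:ℝ)+1)/2^(i+2) ≤ (2:ℝ)^i/2^(i+2) := by gcongr
      rw [hq14] at hd
      linarith
  · right
    constructor
    · have hrge : (3:ℝ) * 2^i ≤ (r:ℝ) := by exact_mod_cast hcase
      have hd : (3:ℝ)*2^i/2^(i+2) ≤ (r:ℝ)/2^(i+2) := by gcongr
      have h34 : (3:ℝ)*2^i/2^(i+2) = 3/4 := by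
        rw [pow_add]; field_simp; ring
      rw [h34] at hd
      linarith
    · have hrle : (r:ℝ) + 1 ≤ 2^(i+2) := by exact_mod_cast hrlt
      have hd : ((r:ℝ)+1)/2^(i+2) ≤ (2:ℝ)^(i+2)/2^(i+2) := by gcongr
      rw [div_self (by positivity : ((2:ℝ)^(i+2)) ≠ 0)] at hd
      linarith

lemma rho_le_Rcnt (n k : ℕ) (x : ℝ) (hx : x ∈ Set.Icc ((k:ℝ)/2^n) ((k+1:ℝ)/2^n)) :
    rho n k ≤ Rcnt x n := by
  apply Finset.card_le_card_of_injOn (fun i => n - 2 - i)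
  · intro i hi
    simp only [Finset.mem_coe, Finset.mem_filter, Finset.mem_range] at hi ⊢
    refine ⟨by omega, cos_nonneg_of_bits n i k (by omega) hi.2 x hx⟩
  · intro a ha b hb hab
    simp only [Finset.coe_filter, Set.mem_setOf_eq, Finset.mem_range] at ha hb
    simp only at hab
    omega

/-! ### The counting identity -/

lemma pow_rho_eq_prod (β : ℝ) (n k : ℕ) :
    β^(rho n k) = ∏ i ∈ Finset.range (n-1), (if k.testBit i = k.testBit (i+1) then β else 1) := by
  rw [Finset.prod_ite, Finset.prod_const, Finset.prod_const, one_pow, mul_one, rho]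

lemma count_sum (β : ℝ) (n : ℕ) (hn : 1 ≤ n) :
    ∑ k ∈ Finset.range (2^n), β^(rho n k) = 2*(1+β)^(n-1) := by
  induction n with
  | zero => omega
  | succ n ih =>
    rcases Nat.eq_zero_or_pos n with h0 | hpos
    · subst h0; simp [rho]
    · have ihn := ih hpos
      obtain ⟨m, rfl⟩ := Nat.exists_eq_succ_of_ne_zero (Nat.pos_iff_ne_zero.mp hpos)
      have hsplit : ∑ k ∈ Finset.range (2^(m+1+1)), β^(rho (m+1+1) k)
          = ∑ k ∈ Finset.range (2^(m+1)), β^(rho (m+2) k)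
            + ∑ k ∈ Finset.range (2^(m+1)), β^(rho (m+2) (2^(m+1) + k)) := by
        rw [pow_succ, mul_two, Finset.sum_range_add]
      have key : ∀ k ∈ Finset.range (2^(m+1)),
          β^(rho (m+2) k) + β^(rho (m+2) (2^(m+1) + k))
          = β^(rho (m+1) k) * (1+β) := by
        intro k hk
        have hklt : k < 2^(m+1) := Finset.mem_range.1 hk
        have e1 : β^(rho (m+2) k)
            = β^(rho (m+1) k) * (if k.testBit m = k.testBit (m+1) then β else 1) := by
          rw [pow_rho_eq_prod, pow_rho_eq_prod]
          show ∏ i ∈ Finset.range (m+1), _ = _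
          rw [Finset.prod_range_succ]
          simp only [Nat.add_sub_cancel]
        have e2 : β^(rho (m+2) (2^(m+1) + k))
            = β^(rho (m+1) k)
              * (if (2^(m+1)+k).testBit m = (2^(m+1)+k).testBit (m+1) then β else 1) := by
          rw [pow_rho_eq_prod, pow_rho_eq_prod]
          show ∏ i ∈ Finset.range (m+1), _ = _
          rw [Finset.prod_range_succ]
          simp only [Nat.add_sub_cancel]
          congr 1
          refine Finset.prod_congr rfl fun i hi => ?_
          have him : i < m := Finset.mem_range.1 hi
          rw [Nat.testBit_two_pow_add_gt (by omega), Nat.testBit_two_pow_add_gt (by omega)]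
        have hb1 : k.testBit (m+1) = false := Nat.testBit_lt_two_pow hklt
        have hb2 : (2^(m+1)+k).testBit (m+1) = !k.testBit (m+1) :=
          Nat.testBit_two_pow_add_eq k (m+1)
        have hb3 : (2^(m+1)+k).testBit m = k.testBit m := Nat.testBit_two_pow_add_gt (by omega) k
        rw [e1, e2, hb1, hb2, hb3, hb1]
        cases hkm : k.testBit m <;> simp <;> ring
      calc ∑ k ∈ Finset.range (2^(m+1+1)), β^(rho (m+1+1) k)
          = ∑ k ∈ Finset.range (2^(m+1)), (β^(rho (m+1) k) * (1+β)) := by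
            rw [hsplit, ← Finset.sum_add_distrib]
            exact Finset.sum_congr rfl key
        _ = (∑ k ∈ Finset.range (2^(m+1)), β^(rho (m+1) k)) * (1+β) := by
            rw [← Finset.sum_mul]
        _ = 2*(1+β)^(m+1-1) * (1+β) := by rw [ihn]
        _ = 2*(1+β)^(m+1+1-1) := by simp only [Nat.add_sub_cancel]; ring

/-! ### The maximizing orbit -/

lemma cc_third (ℓ : ℕ) : cc (1/3) ℓ = -(1/2) := by
  induction ℓ with
  | zero =>
    unfold cc
    rw [show 2*Real.pi*((2:ℝ)^0*(1/3)) = Real.pi - Real.pi/3 by ring]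
    rw [Real.cos_pi_sub, Real.cos_pi_div_three]
  | succ m ih =>
    unfold cc at ih ⊢
    rw [show 2*Real.pi*((2:ℝ)^(m+1)*(1/3)) = 2*(2*Real.pi*((2:ℝ)^m*(1/3))) by ring]
    rw [Real.cos_two_mul, ih]
    norm_num

lemma psiSum_third (n : ℕ) : psiSum n (1/3) = n * Real.log (3/2) := by
  rw [psiSum_eq]
  have h : ∀ ℓ ∈ Finset.range n, Real.log (uu (1/3) ℓ) = Real.log (3/2) := by
    intro ℓ _; unfold uu; rw [cc_third]; norm_num
  rw [Finset.sum_congr rfl h, Finset.sum_const, Finset.card_range, nsmul_eq_mul]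

/-! ### Master pointwise bound -/

lemma master_bound (t : ℝ) (ht : 0 ≤ t) (n : ℕ) (hn : 1 ≤ n) (k : ℕ) (x : ℝ)
    (hx : x ∈ Set.Icc ((k:ℝ)/2^n) ((k+1:ℝ)/2^n)) :
    Real.exp (t * psiSum n x) ≤
      (8 * (27/8)^(n-1)) ^ (t/3) * ((16/27 : ℝ) ^ (t/3)) ^ (rho n k) := by
  have hE : (0:ℝ) ≤ Real.exp (psiSum n x) := (Real.exp_pos _).le
  have h1 : Real.exp (t * psiSum n x) = ((Real.exp (psiSum n x))^(3:ℕ)) ^ (t/3) := by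
    rw [← Real.rpow_natCast (Real.exp (psiSum n x)) 3, ← Real.rpow_mul hE, ← Real.exp_mul]
    ring_nf
  rw [h1]
  have h2 : ((Real.exp (psiSum n x))^(3:ℕ)) ^ (t/3)
      ≤ (8 * (27/8)^(n-1) * (16/27)^(Rcnt x n)) ^ (t/3) :=
    Real.rpow_le_rpow (by positivity) (exp_cube_bound x n hn) (by linarith)
  refine h2.trans ?_
  rw [Real.mul_rpow (by positivity) (by positivity)]
  apply mul_le_mul_of_nonneg_left ?_ (by positivity)
  have h3 : (((16:ℝ)/27)^(Rcnt x n)) ^ (t/3) = (((16:ℝ)/27) ^ (t/3)) ^ (Rcnt x n) := by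
    rw [← Real.rpow_natCast ((16:ℝ)/27) (Rcnt x n), ← Real.rpow_mul (by norm_num),
      mul_comm, Real.rpow_mul (by norm_num), Real.rpow_natCast]
  rw [h3]
  apply pow_le_pow_of_le_one (by positivity)
    (Real.rpow_le_one (by norm_num) (by norm_num) (by linarith))
  exact rho_le_Rcnt n k x hx

/-! ### Bounds on `A` -/

lemma A_le (t : ℝ) (ht : 0 ≤ t) (n : ℕ) (hn : 1 ≤ n) :
    A t n ≤ ENNReal.ofReal
      ((8 * ((27:ℝ)/8)^(n-1)) ^ (t/3) * (2 * (1 + ((16:ℝ)/27)^(t/3))^(n-1))) := by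
  set C := (8 * ((27:ℝ)/8)^(n-1)) ^ (t/3) with hC
  set β := ((16:ℝ)/27) ^ (t/3) with hβ
  have hβ0 : 0 ≤ β := Real.rpow_nonneg (by norm_num) _
  have hsum : ∑ k ∈ Finset.range (2^n), C * β^(rho n k) = C * (2*(1+β)^(n-1)) := by
    rw [← Finset.mul_sum, count_sum β n hn]
  calc A t n ≤ ∑ k ∈ Finset.range (2^n), ENNReal.ofReal (C * β^(rho n k)) := by
        apply Finset.sum_le_sum
        intro k _
        apply iSup₂_le
        intro y hy
        exact ENNReal.ofReal_le_ofReal (master_bound t ht n hn k y hy)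
    _ = ENNReal.ofReal (∑ k ∈ Finset.range (2^n), C * β^(rho n k)) := by
        rw [ENNReal.ofReal_sum_of_nonneg]
        intro k _
        have hC0 : 0 ≤ C := Real.rpow_nonneg (by positivity) _
        positivity
    _ = _ := by rw [hsum]

lemma A_ge (t : ℝ) (n : ℕ) :
    ENNReal.ofReal (Real.exp (t * ((n:ℝ) * Real.log (3/2)))) ≤ A t n := by
  set k₀ := 2^n/3 with hk₀
  have hk : k₀ ∈ Finset.range (2^n) :=
    Finset.mem_range.2 (Nat.div_lt_self (by positivity) (by norm_num))
  have h2n : (0:ℝ) < 2^n := by positivity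
  have hd := Nat.div_add_mod (2^n) 3
  have hm : 2^n % 3 < 3 := Nat.mod_lt _ (by norm_num)
  have hmem : (1/3 : ℝ) ∈ Set.Icc ((k₀:ℝ)/2^n) (((k₀:ℝ)+1)/2^n) := by
    constructor
    · rw [div_le_iff₀ h2n]
      have h3 : (k₀:ℝ) * 3 ≤ 2^n := by
        have h : ((k₀*3 : ℕ):ℝ) ≤ ((2^n : ℕ):ℝ) := Nat.cast_le.mpr (by omega)
        push_cast at h; linarith
      linarith
    · rw [le_div_iff₀ h2n]
      have h3 : (2:ℝ)^n ≤ ((k₀:ℝ)+1) * 3 := by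
        have h : ((2^n : ℕ):ℝ) ≤ (((k₀+1)*3 : ℕ):ℝ) := Nat.cast_le.mpr (by omega)
        push_cast at h; linarith
      linarith
  refine le_trans ?_ (Finset.single_le_sum (fun i _ => zero_le) hk)
  have h := le_iSup₂ (f := fun (y:ℝ) (_ : y ∈ Set.Icc ((k₀:ℝ)/2^n) (((k₀:ℝ)+1)/2^n)) =>
    ENNReal.ofReal (Real.exp (t * psiSum n y))) (1/3 : ℝ) hmem
  rw [psiSum_third] at h
  exact h

/-! ### EReal helpers -/

lemma EReal_div_nat (a : ℝ) (n : ℕ) : (a : EReal) / (n : EReal) = ((a / n : ℝ) : EReal) := by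
  rw [← EReal.coe_coe_eq_natCast, ← EReal.coe_div]

lemma nat_EReal_nonneg (n : ℕ) : (0:EReal) ≤ (n : EReal) := by
  rw [← EReal.coe_coe_eq_natCast]
  exact_mod_cast EReal.coe_nonneg.2 (Nat.cast_nonneg n)

/-! ### Limits -/

lemma log27 : Real.log (27/8) = 3 * Real.log (3/2) := by
  rw [show (27:ℝ)/8 = (3/2)^3 by norm_num, Real.log_pow]
  push_cast; ring

lemma upp_seq_tendsto (t : ℝ) (ht : 0 ≤ t) :
    Tendsto (fun n : ℕ => Real.log
        ((8 * ((27:ℝ)/8)^(n-1)) ^ (t/3) * (2 * (1 + ((16:ℝ)/27)^(t/3))^(n-1))) / n)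
      atTop (nhds (t * Real.log (3/2) + Real.log (1 + ((16:ℝ)/27)^(t/3)))) := by
  set β := ((16:ℝ)/27) ^ (t/3) with hβ
  have hβ0 : 0 ≤ β := Real.rpow_nonneg (by norm_num) _
  set L := t * Real.log (3/2) + Real.log (1 + β) with hL
  set K := (t/3) * Real.log 8 + Real.log 2 with hK
  have hlim : Tendsto (fun n : ℕ => L + (K - L) * (1/(n:ℝ))) atTop (nhds L) := by
    have h0 := tendsto_one_div_atTop_nhds_zero_nat (𝕜 := ℝ)
    have h1 : Tendsto (fun _ : ℕ => L) atTop (nhds L) := tendsto_const_nhds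
    have := h1.add (h0.const_mul (K - L))
    simpa using this
  refine hlim.congr' ?_
  filter_upwards [eventually_ge_atTop 1] with n hn
  have hnR : (1:ℝ) ≤ (n:ℝ) := by exact_mod_cast hn
  have hn0 : (n:ℝ) ≠ 0 := by linarith
  have hc : ((n-1 : ℕ):ℝ) = (n:ℝ) - 1 := by
    rw [Nat.cast_sub hn]; norm_num
  have hpos1 : (0:ℝ) < 8 * ((27:ℝ)/8)^(n-1) := by positivity
  have h1β : (0:ℝ) < 1 + β := by linarith
  have hlogT : Real.log ((8 * ((27:ℝ)/8)^(n-1)) ^ (t/3) * (2 * (1 + β)^(n-1)))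
      = K + ((n:ℝ) - 1) * L := by
    rw [Real.log_mul (by positivity) (by positivity)]
    rw [Real.log_rpow hpos1]
    rw [Real.log_mul (by norm_num) (by positivity)]
    rw [Real.log_mul (by norm_num) (by positivity)]
    rw [Real.log_pow, Real.log_pow, log27, hc, hK, hL]
    ring
  rw [hlogT]
  field_simp
  ring

lemma pressure_low (p : ℝ → EReal)
    (hp : ∀ t : ℝ, Filter.Tendsto (fun n : ℕ => ENNReal.log (A t n) / (n : EReal))
      Filter.atTop (nhds (p t))) (t : ℝ) :
    ((t * Real.log (3/2) : ℝ) : EReal) ≤ p t := by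
  refine ge_of_tendsto (hp t) ?_
  filter_upwards [eventually_ge_atTop 1] with n hn
  have h1 := A_ge t n
  have h2 := ENNReal.log_monotone h1
  rw [ENNReal.log_ofReal_of_pos (Real.exp_pos _), Real.log_exp] at h2
  have hnR : (1:ℝ) ≤ (n:ℝ) := by exact_mod_cast hn
  calc ((t * Real.log (3/2) : ℝ) : EReal)
      = ((t * ((n:ℝ) * Real.log (3/2)) / n : ℝ) : EReal) := by
        congr 1; field_simp
    _ = ((t * ((n:ℝ) * Real.log (3/2)) : ℝ) : EReal) / (n : EReal) := (EReal_div_nat _ n).symm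
    _ ≤ _ := EReal.div_le_div_right_of_nonneg (nat_EReal_nonneg n) h2

lemma pressure_upp (p : ℝ → EReal)
    (hp : ∀ t : ℝ, Filter.Tendsto (fun n : ℕ => ENNReal.log (A t n) / (n : EReal))
      Filter.atTop (nhds (p t))) (t : ℝ) (ht : 0 ≤ t) :
    p t ≤ ((t * Real.log (3/2) + Real.log (1 + ((16:ℝ)/27)^(t/3)) : ℝ) : EReal) := by
  refine le_of_tendsto_of_tendsto (hp t) (EReal.tendsto_coe.2 (upp_seq_tendsto t ht)) ?_
  filter_upwards [eventually_ge_atTop 1] with n hn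
  have hβ0 : (0:ℝ) ≤ ((16:ℝ)/27)^(t/3) := Real.rpow_nonneg (by norm_num) _
  have hT : (0:ℝ) < (8 * ((27:ℝ)/8)^(n-1)) ^ (t/3) * (2 * (1 + ((16:ℝ)/27)^(t/3))^(n-1)) := by
    have h1 : (0:ℝ) < (8 * ((27:ℝ)/8)^(n-1)) ^ (t/3) :=
      Real.rpow_pos_of_pos (by positivity) _
    have h2 : (0:ℝ) < 1 + ((16:ℝ)/27)^(t/3) := by linarith
    positivity
  have h2 := ENNReal.log_monotone (A_le t ht n hn)
  rw [ENNReal.log_ofReal_of_pos hT] at h2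
  calc ENNReal.log (A t n) / (n : EReal)
      ≤ ((Real.log ((8 * ((27:ℝ)/8)^(n-1)) ^ (t/3)
          * (2 * (1 + ((16:ℝ)/27)^(t/3))^(n-1))) : ℝ) : EReal) / (n : EReal) :=
        EReal.div_le_div_right_of_nonneg (nat_EReal_nonneg n) h2
    _ = _ := EReal_div_nat _ n

lemma g_tendsto : Tendsto (fun t : ℝ => Real.log (1 + ((16:ℝ)/27)^(t/3))) atTop (nhds 0) := by
  have h1 : Tendsto (fun t : ℝ => ((16:ℝ)/27)^(t/3)) atTop (nhds 0) := by
    have heq : ∀ t : ℝ, ((16:ℝ)/27)^(t/3) = Real.exp (t * (Real.log (16/27) / 3)) := by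
      intro t
      rw [Real.rpow_def_of_pos (by norm_num)]
      congr 1; ring
    have hneg : Real.log (16/27) / 3 < 0 := by
      have : Real.log ((16:ℝ)/27) < 0 := Real.log_neg (by norm_num) (by norm_num)
      linarith
    have hbot : Tendsto (fun t : ℝ => t * (Real.log (16/27) / 3)) atTop atBot :=
      Filter.Tendsto.atTop_mul_const_of_neg hneg tendsto_id
    have h := Real.tendsto_exp_atBot.comp hbot
    refine h.congr ?_
    intro t; rw [heq]; rfl
  have hcont : Tendsto (fun s : ℝ => Real.log (1 + s)) (nhds 0) (nhds 0) := by
    have := (Real.continuousAt_log (by norm_num : (1:ℝ) + 0 ≠ 0)).tendsto.comp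
      (tendsto_const_nhds.add (tendsto_id (α := ℝ)))
    simpa [Function.comp_def] using this
  exact hcont.comp h1

theorem pressure_asymptote (p : ℝ → EReal)
    (hp : ∀ t : ℝ, Filter.Tendsto (fun n : ℕ => ENNReal.log (A t n) / (n : EReal))
      Filter.atTop (nhds (p t))) :
    (∀ t : ℝ, 0 ≤ t → ((t * Real.log (3/2) : ℝ) : EReal) ≤ p t) ∧
    Filter.Tendsto (fun t : ℝ => p t - ((t * Real.log (3/2) : ℝ) : EReal))
      Filter.atTop (nhds (0 : EReal)) := by
  constructor
  · intro t _
    exact pressure_low p hp t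
  · have key : ∀ t : ℝ, 0 ≤ t →
        p t - ((t * Real.log (3/2) : ℝ) : EReal)
          = (((p t).toReal - t * Real.log (3/2) : ℝ) : EReal)
        ∧ 0 ≤ (p t).toReal - t * Real.log (3/2)
        ∧ (p t).toReal - t * Real.log (3/2) ≤ Real.log (1 + ((16:ℝ)/27)^(t/3)) := by
      intro t ht
      have hlo := pressure_low p hp t
      have hup := pressure_upp p hp t ht
      have hnb : p t ≠ ⊥ := fun h => by
        rw [h] at hlo; exact (EReal.bot_lt_coe _).not_ge hlo
      have hnt : p t ≠ ⊤ := fun h => by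
        rw [h] at hup; exact (EReal.coe_lt_top _).not_ge hup
      have hq : ((p t).toReal : EReal) = p t := EReal.coe_toReal hnt hnb
      rw [← hq] at hlo hup
      rw [EReal.coe_le_coe_iff] at hlo hup
      refine ⟨?_, by linarith, by linarith⟩
      rw [EReal.coe_sub, hq]
    have hreal : Tendsto (fun t : ℝ => (p t).toReal - t * Real.log (3/2)) atTop (nhds 0) := by
      apply tendsto_of_tendsto_of_tendsto_of_le_of_le'
        (tendsto_const_nhds (α := ℝ)) g_tendsto
      · filter_upwards [eventually_ge_atTop (0:ℝ)] with t ht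
        exact (key t ht).2.1
      · filter_upwards [eventually_ge_atTop (0:ℝ)] with t ht
        exact (key t ht).2.2
    have hcoe : Tendsto (fun t : ℝ => (((p t).toReal - t * Real.log (3/2) : ℝ) : EReal))
        atTop (nhds (0 : EReal)) := by
      rw [← EReal.coe_zero]
      exact EReal.tendsto_coe.2 hreal
    refine hcoe.congr' ?_
    filter_upwards [eventually_ge_atTop (0:ℝ)] with t ht
    exact ((key t ht).1).symm
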